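/- Consider the perfect-information WGA G with states Q = {q_0, q_1}, initial state q_0, a single action a, observations {q_0} and {q_1}, and transitions (q_0,a,q_1) of weight −1, (q_1,a,q_0) of weight +1, and (q_1,a,q_1) of weight 0. Then Eve wins the objectives MPInf(0) and MPSup(0) in G, but for every lmax ≥ 1 she does not win DirFix(0,lmax), UFix(0,lmax) or Fix(0,lmax), and she does not win UDirBnd(0), DirBnd(0), UBnd(0) or Bnd(0). Hence winning the mean-payoff objectives is in general not sufficient for winning any of the fixed or bounded window mean-payoff objectives. -/

import Mathlib

open scoped Classical

/-- A weighted game arena with partial observation. -/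
structure WGA where
  Q : Type
  fintypeQ : Fintype Q
  qI : Q
  A : Type
  fintypeA : Fintype A
  nonemptyA : Nonempty A
  Δ : Q → A → Q → Prop
  total : ∀ q a, ∃ q', Δ q a q'
  w : Q → A → Q → ℤ
  Obs : Set (Set Q)
  obs_empty : ∅ ∉ Obs
  obs_partition : ∀ q : Q, ∃! o, o ∈ Obs ∧ q ∈ o

attribute [instance] WGA.fintypeQ WGA.fintypeA WGA.nonemptyA

namespace WGA

variable (G : WGA)

/-- A concrete path compatible with the given sequences of observations and actions. -/
def Concretizes (obs : ℕ → Set G.Q) (act : ℕ → G.A) (π : ℕ → G.Q) : Prop :=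
  (∀ i, π i ∈ obs i) ∧ ∀ i, G.Δ (π i) (act i) (π (i + 1))

/-- Plays: infinite abstract paths starting at the initial observation. -/
def IsPlay (obs : ℕ → Set G.Q) (act : ℕ → G.A) : Prop :=
  (∀ i, obs i ∈ G.Obs) ∧ G.qI ∈ obs 0 ∧ ∃ π, G.Concretizes obs act π

/-- Sum of the `j` transition weights starting at position `i`. -/
def winSum (π : ℕ → G.Q) (act : ℕ → G.A) (i j : ℕ) : ℤ :=
  ∑ k ∈ Finset.range j, G.w (π (i + k)) (act (i + k)) (π (i + k + 1))

/-- Good window at position `i` with window size bound `lmax`. -/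
def GW (ν : ℚ) (i lmax : ℕ) (π : ℕ → G.Q) (act : ℕ → G.A) : Prop :=
  ∃ j, 1 ≤ j ∧ j ≤ lmax ∧ ν ≤ (G.winSum π act i j : ℚ) / (j : ℚ)

def DirFix (ν : ℚ) (lmax : ℕ) (obs : ℕ → Set G.Q) (act : ℕ → G.A) : Prop :=
  ∀ π, G.Concretizes obs act π → ∀ i, G.GW ν i lmax π act

def UFix (ν : ℚ) (lmax : ℕ) (obs : ℕ → Set G.Q) (act : ℕ → G.A) : Prop :=
  ∃ i, ∀ π, G.Concretizes obs act π → ∀ j, i ≤ j → G.GW ν j lmax π act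

def Fix (ν : ℚ) (lmax : ℕ) (obs : ℕ → Set G.Q) (act : ℕ → G.A) : Prop :=
  ∀ π, G.Concretizes obs act π → ∃ i, ∀ j, i ≤ j → G.GW ν j lmax π act

def UDirBnd (ν : ℚ) (obs : ℕ → Set G.Q) (act : ℕ → G.A) : Prop :=
  ∃ lmax, 1 ≤ lmax ∧ ∀ π, G.Concretizes obs act π → ∀ i, G.GW ν i lmax π act

def DirBnd (ν : ℚ) (obs : ℕ → Set G.Q) (act : ℕ → G.A) : Prop :=
  ∀ π, G.Concretizes obs act π → ∃ lmax, 1 ≤ lmax ∧ ∀ i, G.GW ν i lmax π act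

def UBnd (ν : ℚ) (obs : ℕ → Set G.Q) (act : ℕ → G.A) : Prop :=
  ∃ lmax, 1 ≤ lmax ∧ ∃ i, ∀ π, G.Concretizes obs act π → ∀ j, i ≤ j → G.GW ν j lmax π act

def Bnd (ν : ℚ) (obs : ℕ → Set G.Q) (act : ℕ → G.A) : Prop :=
  ∀ π, G.Concretizes obs act π → ∃ lmax, 1 ≤ lmax ∧ ∃ i, ∀ j, i ≤ j → G.GW ν j lmax π act

noncomputable def MPinf (π : ℕ → G.Q) (act : ℕ → G.A) : ℝ :=
  Filter.liminf (fun n : ℕ => (G.winSum π act 0 n : ℝ) / (n : ℝ)) Filter.atTop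

noncomputable def MPsup (π : ℕ → G.Q) (act : ℕ → G.A) : ℝ :=
  Filter.limsup (fun n : ℕ => (G.winSum π act 0 n : ℝ) / (n : ℝ)) Filter.atTop

def MPInfObj (ν : ℚ) (obs : ℕ → Set G.Q) (act : ℕ → G.A) : Prop :=
  ∀ π, G.Concretizes obs act π → (ν : ℝ) ≤ G.MPinf π act

def MPSupObj (ν : ℚ) (obs : ℕ → Set G.Q) (act : ℕ → G.A) : Prop :=
  ∀ π, G.Concretizes obs act π → (ν : ℝ) ≤ G.MPsup π act

/-- The finite history (prefix) of a play after `n` steps, ending with `obs n`. -/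
def hist (obs : ℕ → Set G.Q) (act : ℕ → G.A) (n : ℕ) : List (Set G.Q × G.A) :=
  (List.range n).map fun i => (obs i, act i)

/-- A play is consistent with an observation-based strategy of Eve. -/
def Consistent (str : List (Set G.Q × G.A) → Set G.Q → G.A)
    (obs : ℕ → Set G.Q) (act : ℕ → G.A) : Prop :=
  ∀ n, act n = str (G.hist obs act n) (obs n)

/-- Eve wins an objective if some observation-based strategy forces it on all plays. -/
def Wins (V : (ℕ → Set G.Q) → (ℕ → G.A) → Prop) : Prop :=
  ∃ str : List (Set G.Q × G.A) → Set G.Q → G.A,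
    ∀ obs act, G.IsPlay obs act → G.Consistent str obs act → V obs act

/-- σ-successors of a set of states. -/
def postSet (σ : G.A) (s : Set G.Q) : Set G.Q := {q' | ∃ q ∈ s, G.Δ q σ q'}

end WGA

/-- The perfect-information WGA of Figure 4: states `q₀ = false`, `q₁ = true`, a single
action, transitions `q₀ →(−1) q₁`, `q₁ →(+1) q₀`, `q₁ →0 q₁`, singleton observations. -/
def G3 : WGA where
  Q := Bool
  fintypeQ := inferInstance
  qI := false
  A := Unit
  fintypeA := inferInstance
  nonemptyA := inferInstance
  Δ := fun q _ q' => ¬(q = false ∧ q' = false)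
  total := fun _ _ => ⟨true, by simp⟩
  w := fun q _ q' => if q = false then (-1 : ℤ) else if q' = false then 1 else 0
  Obs := {{false}, {true}}
  obs_empty := by
    intro h
    simp only [Set.mem_insert_iff, Set.mem_singleton_iff] at h
    rcases h with h | h
    · exact Set.singleton_ne_empty false h.symm
    · exact Set.singleton_ne_empty true h.symm
  obs_partition := by
    intro q
    cases q
    · refine ⟨{false}, ⟨Or.inl rfl, rfl⟩, ?_⟩
      rintro o ⟨ho, hq⟩
      simp only [Set.mem_insert_iff, Set.mem_singleton_iff] at ho
      rcases ho with rfl | rfl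
      · rfl
      · simp only [Set.mem_singleton_iff] at hq
        exact absurd hq (by decide)
    · refine ⟨{true}, ⟨Or.inr rfl, rfl⟩, ?_⟩
      rintro o ⟨ho, hq⟩
      simp only [Set.mem_insert_iff, Set.mem_singleton_iff] at ho
      rcases ho with rfl | rfl
      · simp only [Set.mem_singleton_iff] at hq
        exact absurd hq (by decide)
      · rfl

/-! ### Auxiliary material -/

/-- Potential function: `1` on `false`, `0` on `true`. -/
def gg : Bool → ℤ := fun b => if b then 0 else 1

lemma G3_w_step (a : Unit) (q q' : Bool) (h : G3.Δ q a q') :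
    G3.w q a q' = gg q' - gg q := by
  cases q <;> cases q' <;> simp [G3, gg] at h ⊢

lemma G3_winSum (π : ℕ → Bool) (act : ℕ → Unit)
    (hπ : ∀ i, G3.Δ (π i) (act i) (π (i + 1))) (i j : ℕ) :
    G3.winSum π act i j = gg (π (i + j)) - gg (π i) := by
  induction j with
  | zero => simp [WGA.winSum]
  | succ n ih =>
      have e : G3.winSum π act i (n + 1) = G3.winSum π act i n +
          G3.w (π (i + n)) (act (i + n)) (π (i + n + 1)) := Finset.sum_range_succ _ _
      rw [e, ih,
        G3_w_step (act (i + n)) _ _ (hπ (i + n)),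
        show i + (n + 1) = i + n + 1 from rfl]
      ring

lemma gg_bounds (b : Bool) : 0 ≤ gg b ∧ gg b ≤ 1 := by cases b <;> simp [gg]

lemma G3_winSum_abs (π : ℕ → Bool) (act : ℕ → Unit)
    (hπ : ∀ i, G3.Δ (π i) (act i) (π (i + 1))) (i j : ℕ) :
    |G3.winSum π act i j| ≤ 1 := by
  rw [G3_winSum π act hπ i j]
  have h1 := gg_bounds (π (i + j))
  have h2 := gg_bounds (π i)
  rw [abs_le]
  omega

lemma G3_tendsto (π : ℕ → Bool) (act : ℕ → Unit)
    (hπ : ∀ i, G3.Δ (π i) (act i) (π (i + 1))) :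
    Filter.Tendsto (fun n : ℕ => (G3.winSum π act 0 n : ℝ) / (n : ℝ))
      Filter.atTop (nhds 0) := by
  refine squeeze_zero_norm ?_ tendsto_one_div_atTop_nhds_zero_nat
  · intro n
    rcases Nat.eq_zero_or_pos n with rfl | hn
    · simp [WGA.winSum]
    · have hb : |(G3.winSum π act 0 n : ℝ)| ≤ 1 := by
        have := G3_winSum_abs π act hπ 0 n
        calc |(G3.winSum π act 0 n : ℝ)| = ((|G3.winSum π act 0 n| : ℤ) : ℝ) := by
              push_cast; rfl
          _ ≤ 1 := by exact_mod_cast this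
      have hnpos : (0 : ℝ) < n := by exact_mod_cast hn
      rw [norm_div, Real.norm_natCast]
      gcongr
      rw [Real.norm_eq_abs]
      exact hb

/-- The bad path: at `false` exactly at time `0` and the powers `2^(k+1)`. -/
noncomputable def badπ : ℕ → Bool :=
  fun n => if n = 0 ∨ ∃ k, n = 2 ^ (k + 1) then false else true

lemma badπ_true (n : ℕ) (h0 : n ≠ 0) (hp : ∀ k, n ≠ 2 ^ (k + 1)) : badπ n = true := by
  rw [badπ, if_neg]
  rintro (h | ⟨k, hk⟩)
  · exact h0 h
  · exact hp k hk

lemma badπ_pow (k : ℕ) : badπ (2 ^ (k + 1)) = false := by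
  rw [badπ, if_pos (Or.inr ⟨k, rfl⟩)]

lemma badπ_false (n : ℕ) (h : badπ n = false) : n = 0 ∨ ∃ k, n = 2 ^ (k + 1) := by
  by_contra hc
  push_neg at hc
  rw [badπ_true n hc.1 hc.2] at h
  simp at h

lemma badπ_step (i : ℕ) : ¬ (badπ i = false ∧ badπ (i + 1) = false) := by
  rintro ⟨h1, h2⟩
  rcases badπ_false _ h1 with rfl | ⟨k, rfl⟩
  · rcases badπ_false _ h2 with h | ⟨m, hm⟩
    · omega
    · have e1 : 1 ≤ 2 ^ m := Nat.one_le_two_pow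
      have e2 : 2 ^ (m + 1) = 2 * 2 ^ m := by ring
      omega
  · rcases badπ_false _ h2 with h | ⟨m, hm⟩
    · have e1 : 1 ≤ 2 ^ k := Nat.one_le_two_pow
      have e2 : 2 ^ (k + 1) = 2 * 2 ^ k := by ring
      omega
    · have e1 : 2 ^ (m + 1) = 2 * 2 ^ m := by ring
      have e2 : 2 ^ (k + 1) = 2 * 2 ^ k := by ring
      omega

lemma badπ_between (k n : ℕ) (h1 : 2 ^ (k + 1) < n) (h2 : n < 2 ^ (k + 2)) :
    badπ n = true := by
  apply badπ_true
  · have : 1 ≤ 2 ^ (k + 1) := Nat.one_le_two_pow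
    omega
  · intro m hm
    subst hm
    have hlt : k + 1 < m + 1 := by
      by_contra h
      have := Nat.pow_le_pow_right (show 1 ≤ 2 by omega) (show m + 1 ≤ k + 1 by omega)
      omega
    have := Nat.pow_le_pow_right (show 1 ≤ 2 by omega) (show k + 2 ≤ m + 1 by omega)
    omega

lemma badπ_conc (act : ℕ → Unit) : ∀ i, G3.Δ (badπ i) (act i) (badπ (i + 1)) :=
  fun i => badπ_step i

/-- For every `lmax` and every `i₀` there is a failing window position `≥ i₀`. -/
lemma noGW (lmax i₀ : ℕ) (act : ℕ → Unit) :
    ∃ i, i₀ ≤ i ∧ ¬ G3.GW 0 i lmax badπ act := by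
  set k := max i₀ lmax with hk
  refine ⟨2 ^ (k + 1), ?_, ?_⟩
  · have : k < 2 ^ (k + 1) := (Nat.lt_two_pow_self (n := k)).trans_le
      (Nat.pow_le_pow_right (by omega) (by omega))
    omega
  · rintro ⟨j, hj1, hjl, hge⟩
    have hklt : k < 2 ^ (k + 1) := (Nat.lt_two_pow_self (n := k)).trans_le
      (Nat.pow_le_pow_right (by omega) (by omega))
    have htrue : badπ (2 ^ (k + 1) + j) = true := by
      apply badπ_between k
      · omega
      · have : 2 ^ (k + 2) = 2 ^ (k + 1) + 2 ^ (k + 1) := by ring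
        omega
    have hfalse : badπ (2 ^ (k + 1)) = false := badπ_pow k
    have hsum : G3.winSum badπ act (2 ^ (k + 1)) j = -1 := by
      rw [G3_winSum badπ act (badπ_conc act) _ j, htrue, hfalse, gg]
      simp [gg]
    rw [hsum] at hge
    have hjpos : (0 : ℚ) < (j : ℚ) := by exact_mod_cast hj1
    have : ((-1 : ℤ) : ℚ) / (j : ℚ) < 0 := by
      apply div_neg_of_neg_of_pos _ hjpos
      norm_num
    linarith

/-- The bad play. -/
noncomputable def badObs : ℕ → Set Bool := fun n => {badπ n}

lemma badObs_isPlay (act : ℕ → Unit) : G3.IsPlay badObs act := by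
  refine ⟨?_, ?_, badπ, fun i => rfl, badπ_conc act⟩
  · intro i
    cases h : badπ i
    · left; rw [badObs, h]
    · right; rw [badObs, h]; rfl
  · show G3.qI ∈ badObs 0
    have : badπ 0 = false := by rw [badπ, if_pos (Or.inl rfl)]
    rw [badObs, this]; rfl

lemma badπ_only (act : ℕ → Unit) (π : ℕ → Bool) (h : G3.Concretizes badObs act π) :
    π = badπ := by
  funext i
  have := h.1 i
  replace this : π i = badπ i := Set.mem_singleton_iff.mp this
  exact this

/-- in `G3`, Eve wins both mean-payoff objectives with threshold 0, but none
of the fixed or bounded window mean-payoff objectives. -/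
theorem mp_not_sufficient_for_wmp :
    G3.Wins (G3.MPInfObj 0) ∧ G3.Wins (G3.MPSupObj 0) ∧
    (∀ lmax : ℕ, 1 ≤ lmax →
      ¬ G3.Wins (G3.DirFix 0 lmax) ∧ ¬ G3.Wins (G3.UFix 0 lmax) ∧
      ¬ G3.Wins (G3.Fix 0 lmax)) ∧
    ¬ G3.Wins (G3.UDirBnd 0) ∧ ¬ G3.Wins (G3.DirBnd 0) ∧
    ¬ G3.Wins (G3.UBnd 0) ∧ ¬ G3.Wins (G3.Bnd 0) := by
  have hMPi : G3.Wins (G3.MPInfObj 0) := by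
    refine ⟨fun _ _ => (), fun obs act hplay _ π hconc => ?_⟩
    have := (G3_tendsto π act hconc.2).liminf_eq
    rw [WGA.MPinf, this]
    norm_num
  have hMPs : G3.Wins (G3.MPSupObj 0) := by
    refine ⟨fun _ _ => (), fun obs act hplay _ π hconc => ?_⟩
    have := (G3_tendsto π act hconc.2).limsup_eq
    rw [WGA.MPsup, this]
    norm_num
  refine ⟨hMPi, hMPs, ?_, ?_, ?_, ?_, ?_⟩
  · intro lmax hlmax
    refine ⟨?_, ?_, ?_⟩
    · rintro ⟨str, h⟩
      have hV := h badObs (fun n => str (G3.hist badObs (fun _ => ()) n) (badObs n))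
        (badObs_isPlay _) (fun n => rfl)
      set act := fun n => str (G3.hist badObs (fun _ => ()) n) (badObs n)
      obtain ⟨i, _, hng⟩ := noGW lmax 0 act
      exact hng (hV badπ ⟨fun i => rfl, badπ_conc act⟩ i)
    · rintro ⟨str, h⟩
      have hV := h badObs (fun n => str (G3.hist badObs (fun _ => ()) n) (badObs n))
        (badObs_isPlay _) (fun n => rfl)
      set act := fun n => str (G3.hist badObs (fun _ => ()) n) (badObs n)
      obtain ⟨i, hi⟩ := hV
      obtain ⟨j, hij, hng⟩ := noGW lmax i act
      exact hng (hi badπ ⟨fun i => rfl, badπ_conc act⟩ j hij)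
    · rintro ⟨str, h⟩
      have hV := h badObs (fun n => str (G3.hist badObs (fun _ => ()) n) (badObs n))
        (badObs_isPlay _) (fun n => rfl)
      set act := fun n => str (G3.hist badObs (fun _ => ()) n) (badObs n)
      obtain ⟨i, hi⟩ := hV badπ ⟨fun i => rfl, badπ_conc act⟩
      obtain ⟨j, hij, hng⟩ := noGW lmax i act
      exact hng (hi j hij)
  · rintro ⟨str, h⟩
    have hV := h badObs (fun n => str (G3.hist badObs (fun _ => ()) n) (badObs n))
      (badObs_isPlay _) (fun n => rfl)
    set act := fun n => str (G3.hist badObs (fun _ => ()) n) (badObs n)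
    obtain ⟨lmax, _, hl⟩ := hV
    obtain ⟨i, _, hng⟩ := noGW lmax 0 act
    exact hng (hl badπ ⟨fun i => rfl, badπ_conc act⟩ i)
  · rintro ⟨str, h⟩
    have hV := h badObs (fun n => str (G3.hist badObs (fun _ => ()) n) (badObs n))
      (badObs_isPlay _) (fun n => rfl)
    set act := fun n => str (G3.hist badObs (fun _ => ()) n) (badObs n)
    obtain ⟨lmax, _, hl⟩ := hV badπ ⟨fun i => rfl, badπ_conc act⟩
    obtain ⟨i, _, hng⟩ := noGW lmax 0 act
    exact hng (hl i)
  · rintro ⟨str, h⟩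
    have hV := h badObs (fun n => str (G3.hist badObs (fun _ => ()) n) (badObs n))
      (badObs_isPlay _) (fun n => rfl)
    set act := fun n => str (G3.hist badObs (fun _ => ()) n) (badObs n)
    obtain ⟨lmax, _, i, hl⟩ := hV
    obtain ⟨j, hij, hng⟩ := noGW lmax i act
    exact hng (hl badπ ⟨fun i => rfl, badπ_conc act⟩ j hij)
  · rintro ⟨str, h⟩
    have hV := h badObs (fun n => str (G3.hist badObs (fun _ => ()) n) (badObs n))
      (badObs_isPlay _) (fun n => rfl)
    set act := fun n => str (G3.hist badObs (fun _ => ()) n) (badObs n)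
    obtain ⟨lmax, _, i, hl⟩ := hV badπ ⟨fun i => rfl, badπ_conc act⟩
    obtain ⟨j, hij, hng⟩ := noGW lmax i act
    exact hng (hl j hij)
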